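/- Let A be a formally real integral domain which is an ℝ-algebra. Let I₀, M₀ be imaginary units whose vector parts are orthogonal in ℝ³, and set K₀ := I₀·M₀ (also an imaginary unit). Let h = h₀ + h₁·ι(I₀) with h₀, h₁ ∈ A, h₁ ≠ 0, set h^s := h₀² + h₁² (nonzero since A is formally real), and let f ∈ Quaternion A be not I₀-sliced. Then h * f * star h is M₀-sliced if and only if there exist f₀, ρ, u, w ∈ A with (h^s)²·u = ρ·(h₀² − h₁²), (h^s)²·w = ρ·h₀·h₁, and f = f₀ + u·ι(M₀) − 2w·ι(K₀). (Theorem 5.6, case (i).) -/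

import Mathlib

open Quaternion

/-- The componentwise extension `ι : ℍ[ℝ] → ℍ[A]` of `algebraMap ℝ A`. -/
noncomputable def qmap {A : Type*} [CommRing A] [Algebra ℝ A] (q : Quaternion ℝ) :
    Quaternion A :=
  ⟨algebraMap ℝ A q.re, algebraMap ℝ A q.imI, algebraMap ℝ A q.imJ, algebraMap ℝ A q.imK⟩

/-- An imaginary unit: a real quaternion with zero real part squaring to `-1`. -/
def IsImaginaryUnit (I : Quaternion ℝ) : Prop := I.re = 0 ∧ I ^ 2 = -1

/-- `q` is `I`-sliced if `q = a + b·ι(I)` for some `a, b ∈ A`. -/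
noncomputable def IsSliced {A : Type*} [CommRing A] [Algebra ℝ A]
    (I : Quaternion ℝ) (q : Quaternion A) : Prop :=
  ∃ a b : A, q = (a : Quaternion A) + (b : Quaternion A) * qmap I

/-- The vector parts of `I` and `M` are orthogonal in `ℝ³`. -/
def OrthIm (I M : Quaternion ℝ) : Prop :=
  I.imI * M.imI + I.imJ * M.imJ + I.imK * M.imK = 0

/-- `A` is formally real: a sum of four squares vanishes only trivially. -/
def FormallyRealFour (A : Type*) [CommRing A] : Prop :=
  ∀ a b c d : A, a ^ 2 + b ^ 2 + c ^ 2 + d ^ 2 = 0 → a = 0 ∧ b = 0 ∧ c = 0 ∧ d = 0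

section QmapLemmas

variable {A : Type*} [CommRing A] [Algebra ℝ A]

theorem qmap_re (q : Quaternion ℝ) : (qmap (A := A) q).re = algebraMap ℝ A q.re := rfl
theorem qmap_imI (q : Quaternion ℝ) : (qmap (A := A) q).imI = algebraMap ℝ A q.imI := rfl
theorem qmap_imJ (q : Quaternion ℝ) : (qmap (A := A) q).imJ = algebraMap ℝ A q.imJ := rfl
theorem qmap_imK (q : Quaternion ℝ) : (qmap (A := A) q).imK = algebraMap ℝ A q.imK := rfl

theorem qmap_mul (x y : Quaternion ℝ) :
    qmap (A := A) (x * y) = qmap x * qmap y := by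
  ext <;>
    simp [qmap_re, qmap_imI, qmap_imJ, qmap_imK, Quaternion.re_mul, Quaternion.imI_mul, Quaternion.imJ_mul,
      Quaternion.imK_mul, map_add, map_sub, map_mul]

theorem qmap_neg_one : qmap (A := A) (-1) = -1 := by
  ext <;> simp [qmap]

theorem qmap_neg (x : Quaternion ℝ) : qmap (A := A) (-x) = -qmap x := by
  ext <;> simp [qmap_re, qmap_imI, qmap_imJ, qmap_imK]

end QmapLemmas

theorem conjugated_sliced_iff_orthogonal_case
    {A : Type*} [CommRing A] [IsDomain A] [Algebra ℝ A] (hFR : FormallyRealFour A)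
    (I₀ M₀ K₀ : Quaternion ℝ) (hI₀ : IsImaginaryUnit I₀) (hM₀ : IsImaginaryUnit M₀)
    (horth : OrthIm I₀ M₀) (hK₀ : K₀ = I₀ * M₀)
    (h₀ h₁ : A) (hh₁ : h₁ ≠ 0) (h : Quaternion A)
    (hh : h = (h₀ : Quaternion A) + (h₁ : Quaternion A) * qmap I₀)
    (hs : A) (hhs : hs = h₀ ^ 2 + h₁ ^ 2)
    (f : Quaternion A) (hf : ¬ IsSliced I₀ f) :
    IsSliced M₀ (h * f * star h) ↔
      ∃ f₀ ρ u w : A,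
        hs ^ 2 * u = ρ * (h₀ ^ 2 - h₁ ^ 2) ∧
        hs ^ 2 * w = ρ * h₀ * h₁ ∧
        f = (f₀ : Quaternion A) + (u : Quaternion A) * qmap M₀
            - ((2 * w : A) : Quaternion A) * qmap K₀ := by
  subst hhs
  subst hh
  obtain ⟨hIre, hI2⟩ := hI₀
  obtain ⟨hMre, hM2⟩ := hM₀
  have ho : I₀.imI * M₀.imI + I₀.imJ * M₀.imJ + I₀.imK * M₀.imK = 0 := horth
  have rI2 : I₀ * I₀ = -1 := by rw [← pow_two]; exact hI2
  have rM2 : M₀ * M₀ = -1 := by rw [← pow_two]; exact hM2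
  -- real component facts
  have rNp : I₀.imI * I₀.imI + I₀.imJ * I₀.imJ + I₀.imK * I₀.imK = 1 := by
    have := congrArg QuaternionAlgebra.re rI2
    simp [Quaternion.re_mul, hIre] at this
    linarith
  have rNq : M₀.imI * M₀.imI + M₀.imJ * M₀.imJ + M₀.imK * M₀.imK = 1 := by
    have := congrArg QuaternionAlgebra.re rM2
    simp [Quaternion.re_mul, hMre] at this
    linarith
  have rK0 : K₀.re = 0 := by
    rw [hK₀]
    simp [Quaternion.re_mul, hIre, hMre]
    linarith
  have rK1 : K₀.imI = I₀.imJ * M₀.imK - I₀.imK * M₀.imJ := by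
    rw [hK₀]; simp [Quaternion.imI_mul, hIre, hMre]
  have rK2 : K₀.imJ = I₀.imK * M₀.imI - I₀.imI * M₀.imK := by
    rw [hK₀]; simp [Quaternion.imJ_mul, hIre, hMre]; ring
  have rK3 : K₀.imK = I₀.imI * M₀.imJ - I₀.imJ * M₀.imI := by
    rw [hK₀]; simp [Quaternion.imK_mul, hIre, hMre]
  have rMI : M₀ * I₀ = -K₀ := by
    rw [hK₀]
    ext
    · simp [Quaternion.re_mul, hIre, hMre]; linarith
    · simp [Quaternion.imI_mul, hIre, hMre]; ring
    · simp [Quaternion.imJ_mul, hIre, hMre]; ring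
    · simp [Quaternion.imK_mul, hIre, hMre]; ring
  have rIK : I₀ * K₀ = -M₀ := by
    rw [hK₀, ← mul_assoc, rI2, neg_one_mul]
  have rKI : K₀ * I₀ = M₀ := by
    rw [hK₀, mul_assoc, rMI, mul_neg, rIK, neg_neg]
  -- quaternion relations in ℍ[A]
  have hII : qmap (A := A) I₀ * qmap I₀ * 1 = -1 := by
    rw [mul_one, ← qmap_mul, rI2, qmap_neg_one]
  have hII' : qmap (A := A) I₀ * qmap I₀ = -1 := by
    rw [← qmap_mul, rI2, qmap_neg_one]
  have hIM : qmap (A := A) I₀ * qmap M₀ = qmap K₀ := by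
    rw [← qmap_mul, ← hK₀]
  have hIK : qmap (A := A) I₀ * qmap K₀ = -qmap M₀ := by
    rw [← qmap_mul, rIK, qmap_neg]
  have hMI : qmap (A := A) M₀ * qmap I₀ = -qmap K₀ := by
    rw [← qmap_mul, rMI, qmap_neg]
  have hKI : qmap (A := A) K₀ * qmap I₀ = qmap M₀ := by
    rw [← qmap_mul, rKI]
  -- scalar atoms in A
  obtain ⟨p1, hp1⟩ : ∃ x : A, algebraMap ℝ A I₀.imI = x := ⟨_, rfl⟩
  obtain ⟨p2, hp2⟩ : ∃ x : A, algebraMap ℝ A I₀.imJ = x := ⟨_, rfl⟩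
  obtain ⟨p3, hp3⟩ : ∃ x : A, algebraMap ℝ A I₀.imK = x := ⟨_, rfl⟩
  obtain ⟨q1, hq1⟩ : ∃ x : A, algebraMap ℝ A M₀.imI = x := ⟨_, rfl⟩
  obtain ⟨q2, hq2⟩ : ∃ x : A, algebraMap ℝ A M₀.imJ = x := ⟨_, rfl⟩
  obtain ⟨q3, hq3⟩ : ∃ x : A, algebraMap ℝ A M₀.imK = x := ⟨_, rfl⟩
  obtain ⟨r1, hr1⟩ : ∃ x : A, algebraMap ℝ A K₀.imI = x := ⟨_, rfl⟩
  obtain ⟨r2, hr2⟩ : ∃ x : A, algebraMap ℝ A K₀.imJ = x := ⟨_, rfl⟩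
  obtain ⟨r3, hr3⟩ : ∃ x : A, algebraMap ℝ A K₀.imK = x := ⟨_, rfl⟩
  have aNp : p1 * p1 + p2 * p2 + p3 * p3 = 1 := by
    rw [← hp1, ← hp2, ← hp3]
    simpa using congrArg (algebraMap ℝ A) rNp
  have aNq : q1 * q1 + q2 * q2 + q3 * q3 = 1 := by
    rw [← hq1, ← hq2, ← hq3]
    simpa using congrArg (algebraMap ℝ A) rNq
  have aOr : p1 * q1 + p2 * q2 + p3 * q3 = 0 := by
    rw [← hp1, ← hp2, ← hp3, ← hq1, ← hq2, ← hq3]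
    simpa using congrArg (algebraMap ℝ A) ho
  have aK1 : r1 = p2 * q3 - p3 * q2 := by
    rw [← hp2, ← hp3, ← hq2, ← hq3, ← hr1]
    simpa using congrArg (algebraMap ℝ A) rK1
  have aK2 : r2 = p3 * q1 - p1 * q3 := by
    rw [← hp1, ← hp3, ← hq1, ← hq3, ← hr2]
    simpa using congrArg (algebraMap ℝ A) rK2
  have aK3 : r3 = p1 * q2 - p2 * q1 := by
    rw [← hp1, ← hp2, ← hq1, ← hq2, ← hr3]
    simpa using congrArg (algebraMap ℝ A) rK3
  have aI0 : algebraMap ℝ A I₀.re = 0 := by rw [hIre, map_zero]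
  have aM0 : algebraMap ℝ A M₀.re = 0 := by rw [hMre, map_zero]
  have aK0 : algebraMap ℝ A K₀.re = 0 := by rw [rK0, map_zero]
  -- nonvanishing facts
  haveI : CharZero A := charZero_of_injective_algebraMap (algebraMap ℝ A).injective
  have hsne : (h₀ ^ 2 + h₁ ^ 2 : A) ≠ 0 := fun e =>
    hh₁ (hFR h₀ h₁ 0 0 (by linear_combination e)).2.1
  have hs2ne : ((h₀ ^ 2 + h₁ ^ 2 : A)) ^ 2 ≠ 0 := pow_ne_zero 2 hsne
  have h2ne : (2 : A) ≠ 0 := two_ne_zero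
  -- star of h
  have hstarh : star ((h₀ : Quaternion A) + (h₁ : Quaternion A) * qmap I₀)
      = (h₀ : Quaternion A) - (h₁ : Quaternion A) * qmap I₀ := by
    ext <;>
      simp [Quaternion.re_mul, Quaternion.imI_mul, Quaternion.imJ_mul, Quaternion.imK_mul,
        qmap_re, qmap_imI, qmap_imJ, qmap_imK, aI0] <;>
      ring
  have cone : ∀ x : A, (x : Quaternion A) = x • (1 : Quaternion A) := fun x => by
    rw [← mul_one ((x : A) : Quaternion A), Quaternion.coe_mul_eq_smul]
  -- the conjugation formula
  have L3 : ∀ x0 x1 x2 x3 : A,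
      ((h₀ : Quaternion A) + (h₁ : Quaternion A) * qmap I₀) *
          ((x0 : Quaternion A) + (x1 : Quaternion A) * qmap I₀ +
            (x2 : Quaternion A) * qmap M₀ + (x3 : Quaternion A) * qmap K₀) *
          star ((h₀ : Quaternion A) + (h₁ : Quaternion A) * qmap I₀)
        = (((h₀ ^ 2 + h₁ ^ 2) * x0 : A) : Quaternion A)
            + (((h₀ ^ 2 + h₁ ^ 2) * x1 : A) : Quaternion A) * qmap I₀
            + (((h₀ ^ 2 - h₁ ^ 2) * x2 - 2 * (h₀ * h₁) * x3 : A) : Quaternion A) * qmap M₀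
            + ((2 * (h₀ * h₁) * x2 + (h₀ ^ 2 - h₁ ^ 2) * x3 : A) : Quaternion A) * qmap K₀ := by
    intro x0 x1 x2 x3
    rw [hstarh]
    simp only [Quaternion.coe_mul_eq_smul, cone, mul_add, add_mul, mul_sub, sub_mul,
      smul_mul_assoc, mul_smul_comm, smul_smul, smul_add, smul_sub, smul_neg,
      mul_assoc, one_mul, mul_one, hII', hIM, hIK, hMI, hKI, mul_neg, neg_mul, neg_neg]
    module
  -- uniqueness of coordinates
  have huniq : ∀ x0 x1 x2 x3 y0 y1 y2 y3 : A,
      ((x0 : Quaternion A) + (x1 : Quaternion A) * qmap I₀ +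
          (x2 : Quaternion A) * qmap M₀ + (x3 : Quaternion A) * qmap K₀
        = (y0 : Quaternion A) + (y1 : Quaternion A) * qmap I₀ +
          (y2 : Quaternion A) * qmap M₀ + (y3 : Quaternion A) * qmap K₀) →
      x0 = y0 ∧ x1 = y1 ∧ x2 = y2 ∧ x3 = y3 := by
    intro x0 x1 x2 x3 y0 y1 y2 y3 E
    have E0 := congrArg QuaternionAlgebra.re E
    have E1 := congrArg QuaternionAlgebra.imI E
    have E2 := congrArg QuaternionAlgebra.imJ E
    have E3 := congrArg QuaternionAlgebra.imK E
    simp only [Quaternion.re_add, Quaternion.imI_add, Quaternion.imJ_add, Quaternion.imK_add,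
      Quaternion.re_mul, Quaternion.imI_mul, Quaternion.imJ_mul, Quaternion.imK_mul,
      Quaternion.re_coe, Quaternion.imI_coe, Quaternion.imJ_coe, Quaternion.imK_coe,
      qmap_re, qmap_imI, qmap_imJ, qmap_imK, aI0, aM0, aK0,
      hp1, hp2, hp3, hq1, hq2, hq3, hr1, hr2, hr3,
      mul_zero, zero_mul, add_zero, zero_add, sub_zero, zero_sub, neg_zero] at E0 E1 E2 E3
    refine ⟨E0, ?_, ?_, ?_⟩
    · linear_combination p1 * E1 + p2 * E2 + p3 * E3 - (x1 - y1) * aNp - (x2 - y2) * aOr -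
        (x3 - y3) * (p1 * aK1 + p2 * aK2 + p3 * aK3)
    · linear_combination q1 * E1 + q2 * E2 + q3 * E3 - (x1 - y1) * aOr - (x2 - y2) * aNq -
        (x3 - y3) * (q1 * aK1 + q2 * aK2 + q3 * aK3)
    · linear_combination (p2 * q3 - p3 * q2) * E1 + (p3 * q1 - p1 * q3) * E2 +
        (p1 * q2 - p2 * q1) * E3 -
        (x3 - y3) * ((p2 * q3 - p3 * q2) * aK1 + (p3 * q1 - p1 * q3) * aK2 +
          (p1 * q2 - p2 * q1) * aK3) -
        (x3 - y3) * ((q1 * q1 + q2 * q2 + q3 * q3) * aNp + aNq -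
          (p1 * q1 + p2 * q2 + p3 * q3) * aOr)
  -- decomposition of f
  have hdec : f = ((f.re : A) : Quaternion A)
      + ((f.imI * p1 + f.imJ * p2 + f.imK * p3 : A) : Quaternion A) * qmap I₀
      + ((f.imI * q1 + f.imJ * q2 + f.imK * q3 : A) : Quaternion A) * qmap M₀
      + ((f.imI * (p2 * q3 - p3 * q2) + f.imJ * (p3 * q1 - p1 * q3) +
          f.imK * (p1 * q2 - p2 * q1) : A) : Quaternion A) * qmap K₀ := by
    ext
    · simp [Quaternion.re_mul, qmap_re, qmap_imI, qmap_imJ, qmap_imK, aI0, aM0, aK0]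
    · simp only [Quaternion.imI_add, Quaternion.imI_mul,
        Quaternion.re_coe, Quaternion.imI_coe, Quaternion.imJ_coe, Quaternion.imK_coe,
        qmap_re, qmap_imI, qmap_imJ, qmap_imK, aI0, aM0, aK0,
        hp1, hq1, hr1, mul_zero, zero_mul, add_zero, zero_add, sub_zero]
      linear_combination
        (-(f.imI * (p2 * q3 - p3 * q2) + f.imJ * (p3 * q1 - p1 * q3) +
          f.imK * (p1 * q2 - p2 * q1))) * aK1 -
        (f.imI * (q2 * q2 + q3 * q3) + f.imJ * (-(q1 * q2)) + f.imK * (-(q1 * q3))) * aNp -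
        (f.imI * (1 - p1 * p1) + f.imJ * (-(p1 * p2)) + f.imK * (-(p1 * p3))) * aNq -
        (f.imI * (p1 * q1 - p2 * q2 - p3 * q3) + f.imJ * (p1 * q2 + p2 * q1) +
          f.imK * (p1 * q3 + p3 * q1)) * aOr
    · simp only [Quaternion.imJ_add, Quaternion.imJ_mul,
        Quaternion.re_coe, Quaternion.imI_coe, Quaternion.imJ_coe, Quaternion.imK_coe,
        qmap_re, qmap_imI, qmap_imJ, qmap_imK, aI0, aM0, aK0,
        hp2, hq2, hr2, mul_zero, zero_mul, add_zero, zero_add, sub_zero]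
      linear_combination
        (-(f.imI * (p2 * q3 - p3 * q2) + f.imJ * (p3 * q1 - p1 * q3) +
          f.imK * (p1 * q2 - p2 * q1))) * aK2 -
        (f.imI * (-(q1 * q2)) + f.imJ * (q1 * q1 + q3 * q3) + f.imK * (-(q2 * q3))) * aNp -
        (f.imI * (-(p1 * p2)) + f.imJ * (1 - p2 * p2) + f.imK * (-(p2 * p3))) * aNq -
        (f.imI * (p1 * q2 + p2 * q1) + f.imJ * (p2 * q2 - p1 * q1 - p3 * q3) +
          f.imK * (p2 * q3 + p3 * q2)) * aOr
    · simp only [Quaternion.imK_add, Quaternion.imK_mul,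
        Quaternion.re_coe, Quaternion.imI_coe, Quaternion.imJ_coe, Quaternion.imK_coe,
        qmap_re, qmap_imI, qmap_imJ, qmap_imK, aI0, aM0, aK0,
        hp3, hq3, hr3, mul_zero, zero_mul, add_zero, zero_add, sub_zero]
      linear_combination
        (-(f.imI * (p2 * q3 - p3 * q2) + f.imJ * (p3 * q1 - p1 * q3) +
          f.imK * (p1 * q2 - p2 * q1))) * aK3 -
        (f.imI * (-(q1 * q3)) + f.imJ * (-(q2 * q3)) + f.imK * (q1 * q1 + q2 * q2)) * aNp -
        (f.imI * (-(p1 * p3)) + f.imJ * (-(p2 * p3)) + f.imK * (1 - p3 * p3)) * aNq -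
        (f.imI * (p1 * q3 + p3 * q1) + f.imJ * (p2 * q3 + p3 * q2) +
          f.imK * (p3 * q3 - p1 * q1 - p2 * q2)) * aOr
  have htwo : (2 : A) * algebraMap ℝ A 2⁻¹ = 1 := by
    rw [← map_ofNat (algebraMap ℝ A) 2, ← map_mul]
    norm_num
  constructor
  · rintro ⟨a, b, hab⟩
    rw [hdec] at hab
    set x0 : A := f.re with hx0def
    set x1 : A := f.imI * p1 + f.imJ * p2 + f.imK * p3 with hx1def
    set x2 : A := f.imI * q1 + f.imJ * q2 + f.imK * q3 with hx2def
    set x3 : A := f.imI * (p2 * q3 - p3 * q2) + f.imJ * (p3 * q1 - p1 * q3) +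
      f.imK * (p1 * q2 - p2 * q1) with hx3def
    have E : (((h₀ ^ 2 + h₁ ^ 2) * x0 : A) : Quaternion A)
        + (((h₀ ^ 2 + h₁ ^ 2) * x1 : A) : Quaternion A) * qmap I₀
        + (((h₀ ^ 2 - h₁ ^ 2) * x2 - 2 * (h₀ * h₁) * x3 : A) : Quaternion A) * qmap M₀
        + ((2 * (h₀ * h₁) * x2 + (h₀ ^ 2 - h₁ ^ 2) * x3 : A) : Quaternion A) * qmap K₀
        = ((a : A) : Quaternion A) + ((0 : A) : Quaternion A) * qmap I₀
          + ((b : A) : Quaternion A) * qmap M₀ + ((0 : A) : Quaternion A) * qmap K₀ := by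
      rw [← L3 x0 x1 x2 x3, hab]
      simp
    obtain ⟨e0, e1, e2, e3⟩ := huniq _ _ _ _ _ _ _ _ E
    have hx1 : x1 = 0 := by
      rcases mul_eq_zero.mp e1 with h' | h'
      · exact absurd h' hsne
      · exact h'
    refine ⟨x0, (h₀ ^ 2 - h₁ ^ 2) * x2 - 2 * (h₀ * h₁) * x3, x2,
      -(algebraMap ℝ A 2⁻¹ * x3), ?_, ?_, ?_⟩
    · linear_combination (2 * (h₀ * h₁)) * e3
    · have G2' : (2 : A) * ((h₀ ^ 2 + h₁ ^ 2) ^ 2 * (-(algebraMap ℝ A 2⁻¹ * x3)))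
          = 2 * (((h₀ ^ 2 - h₁ ^ 2) * x2 - 2 * (h₀ * h₁) * x3) * h₀ * h₁) := by
        linear_combination (-(h₀ ^ 2 + h₁ ^ 2) ^ 2 * x3) * htwo - (h₀ ^ 2 - h₁ ^ 2) * e3
      exact mul_left_cancel₀ h2ne G2'
    · have hcw : (2 * -(algebraMap ℝ A 2⁻¹ * x3) : A) = -x3 := by
        linear_combination (-x3) * htwo
      rw [hcw, hdec, hx1]
      simp [sub_neg_eq_add]
  · rintro ⟨f₀, ρ, u, w, e1, e2, hfe⟩
    have hY2 : ((h₀ ^ 2 + h₁ ^ 2) ^ 2 : A) *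
        (2 * (h₀ * h₁) * u + (h₀ ^ 2 - h₁ ^ 2) * (-(2 * w))) = 0 := by
      linear_combination (2 * (h₀ * h₁)) * e1 - (2 * (h₀ ^ 2 - h₁ ^ 2)) * e2
    have hY0 : (2 * (h₀ * h₁) * u + (h₀ ^ 2 - h₁ ^ 2) * (-(2 * w)) : A) = 0 := by
      rcases mul_eq_zero.mp hY2 with h' | h'
      · exact absurd h' hs2ne
      · exact h'
    have hfe' : f = ((f₀ : A) : Quaternion A) + ((0 : A) : Quaternion A) * qmap I₀
        + ((u : A) : Quaternion A) * qmap M₀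
        + ((-(2 * w) : A) : Quaternion A) * qmap K₀ := by
      rw [hfe]
      simp only [Quaternion.coe_zero, zero_mul, add_zero, Quaternion.coe_neg, neg_mul,
        sub_eq_add_neg]
    refine ⟨(h₀ ^ 2 + h₁ ^ 2) * f₀,
      (h₀ ^ 2 - h₁ ^ 2) * u - 2 * (h₀ * h₁) * (-(2 * w)), ?_⟩
    rw [hfe', L3 f₀ 0 u (-(2 * w)), hY0]
    simp
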